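/- Fix reals a, x with x < a, t > 0 and u_a < 0. For ε > 0 set A_ε = (a-x)/√(2tε). Then erfc(A_ε)·e^{-u_a/ε} → 0 as ε → 0⁺ when x < a - √(-2 u_a t), and erfc(A_ε)·e^{-u_a/ε} → ∞ as ε → 0⁺ when a - √(-2 u_a t) < x < a. -/

import Mathlib

noncomputable def erfc (z : ℝ) : ℝ := ∫ s in Set.Ioi z, Real.exp (-s^2)

open Real MeasureTheory Filter Set Topology

lemma integrable_exp_neg_sq' : Integrable (fun s : ℝ => Real.exp (-s^2)) := by
  simpa using integrable_exp_neg_mul_sq (one_pos (α := ℝ))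

lemma erfc_nonneg' (z : ℝ) : 0 ≤ erfc z :=
  setIntegral_nonneg measurableSet_Ioi (fun s _ => (Real.exp_pos _).le)

lemma integral_exp_neg_mul_Ioi {z : ℝ} (hz : 0 < z) (a : ℝ) :
    ∫ s in Set.Ioi a, Real.exp (-z * s) = Real.exp (-z * a) / z := by
  have hderiv : ∀ s ∈ Set.Ici a,
      HasDerivAt (fun s : ℝ => -(Real.exp (-z * s) / z)) (Real.exp (-z * s)) s := by
    intro s _
    have h1 : HasDerivAt (fun s : ℝ => -z * s) (-z) s := by
      simpa using (hasDerivAt_id s).const_mul (-z)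
    have h2 := (h1.exp.div_const z).neg
    exact h2.congr_deriv (by rw [mul_neg, neg_div, neg_neg, mul_div_assoc, div_self hz.ne', mul_one])
  have htend : Tendsto (fun s : ℝ => -(Real.exp (-z * s) / z)) atTop (𝓝 0) := by
    have h3 : Tendsto (fun s : ℝ => -z * s) atTop atBot :=
      tendsto_id.const_mul_atTop_of_neg (neg_lt_zero.2 hz)
    have := ((Real.tendsto_exp_atBot.comp h3).div_const z).neg
    simpa using this
  have := integral_Ioi_of_hasDerivAt_of_tendsto' hderiv
    (exp_neg_integrableOn_Ioi a hz) htend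
  rw [this]
  ring

lemma erfc_upper {z : ℝ} (hz : 0 < z) : erfc z ≤ Real.exp (-z^2) / z := by
  have h1 : erfc z ≤ ∫ s in Set.Ioi z, Real.exp (-z * s) := by
    apply setIntegral_mono_on integrable_exp_neg_sq'.integrableOn
      (exp_neg_integrableOn_Ioi z hz) measurableSet_Ioi
    intro s hs
    have hs' : z < s := hs
    exact Real.exp_le_exp.2 (by nlinarith)
  calc erfc z ≤ _ := h1
    _ = Real.exp (-z * z) / z := integral_exp_neg_mul_Ioi hz z
    _ = Real.exp (-z^2) / z := by ring_nf

lemma erfc_lower {z : ℝ} (hz : 0 ≤ z) : Real.exp (-(z+1)^2) ≤ erfc z := by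
  have h1 : Real.exp (-(z+1)^2) ≤ ∫ s in Set.Ioc z (z+1), Real.exp (-s^2) := by
    have : ∫ s in Set.Ioc z (z+1), Real.exp (-(z+1)^2) ≤
        ∫ s in Set.Ioc z (z+1), Real.exp (-s^2) := by
      apply setIntegral_mono_on (integrableOn_const (by simp))
        integrable_exp_neg_sq'.integrableOn measurableSet_Ioc
      intro s hs
      exact Real.exp_le_exp.2 (by nlinarith [hs.1, hs.2])
    calc Real.exp (-(z+1)^2)
        = ∫ s in Set.Ioc z (z+1), Real.exp (-(z+1)^2) := by
          rw [setIntegral_const]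
          rw [Real.volume_real_Ioc]
          simp
      _ ≤ _ := this
  have h2 : ∫ s in Set.Ioc z (z+1), Real.exp (-s^2) ≤ erfc z := by
    apply setIntegral_mono_set integrable_exp_neg_sq'.integrableOn
      (Filter.Eventually.of_forall fun s => (Real.exp_pos _).le)
      (HasSubset.Subset.eventuallyLE Set.Ioc_subset_Ioi_self)
  linarith

theorem erfc_A_eps_exp_limit (a x t u_a : ℝ) (hx : x < a) (ht : 0 < t) (hu : u_a < 0) :
    (x < a - Real.sqrt (-2 * u_a * t) →
      Filter.Tendsto
        (fun ε : ℝ => erfc ((a - x) / Real.sqrt (2 * t * ε)) * Real.exp (-u_a / ε))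
        (nhdsWithin 0 (Set.Ioi 0)) (nhds 0)) ∧
    (a - Real.sqrt (-2 * u_a * t) < x →
      Filter.Tendsto
        (fun ε : ℝ => erfc ((a - x) / Real.sqrt (2 * t * ε)) * Real.exp (-u_a / ε))
        (nhdsWithin 0 (Set.Ioi 0)) Filter.atTop) := by
  have hax : 0 < a - x := by linarith
  set c : ℝ := -u_a - (a - x)^2 / (2 * t) with hc_def
  -- common facts for ε > 0
  have key : ∀ ε : ℝ, 0 < ε →
      0 < Real.sqrt (2 * t * ε) ∧
      ((a - x) / Real.sqrt (2 * t * ε))^2 = (a - x)^2 / (2 * t * ε) := by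
    intro ε hε
    have h1 : (0:ℝ) < 2 * t * ε := by positivity
    refine ⟨Real.sqrt_pos.2 h1, ?_⟩
    rw [div_pow, Real.sq_sqrt h1.le]
  constructor
  · -- case c < 0
    intro hxa
    have hsq : -2 * u_a * t < (a - x)^2 := by
      have h1 : Real.sqrt (-2 * u_a * t) < a - x := by linarith
      have := (Real.sqrt_lt' hax).1 h1
      nlinarith
    have hc : c < 0 := by
      rw [hc_def, sub_neg, lt_div_iff₀ (by positivity)]
      nlinarith
    -- squeeze
    have hg : Tendsto (fun ε : ℝ => Real.sqrt (2 * t * ε) / (a - x))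
        (nhdsWithin 0 (Set.Ioi 0)) (𝓝 0) := by
      have hcont : Tendsto (fun ε : ℝ => Real.sqrt (2 * t * ε) / (a - x)) (𝓝 0) (𝓝 0) := by
        have h0 : Continuous (fun ε : ℝ => Real.sqrt (2 * t * ε) / (a - x)) := by fun_prop
        simpa using h0.tendsto 0
      exact hcont.mono_left nhdsWithin_le_nhds
    apply squeeze_zero' (g := fun ε : ℝ => Real.sqrt (2 * t * ε) / (a - x))
    · filter_upwards with ε
      exact mul_nonneg (erfc_nonneg' _) (Real.exp_pos _).le
    · filter_upwards [self_mem_nhdsWithin] with ε (hε : 0 < ε)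
      obtain ⟨hs, hA2⟩ := key ε hε
      set A : ℝ := (a - x) / Real.sqrt (2 * t * ε) with hA_def
      have hA : 0 < A := div_pos hax hs
      have hexp : -A^2 + -u_a / ε = c / ε := by
        rw [hA2, hc_def]
        field_simp
        ring
      calc erfc A * Real.exp (-u_a / ε)
          ≤ (Real.exp (-A^2) / A) * Real.exp (-u_a / ε) :=
            mul_le_mul_of_nonneg_right (erfc_upper hA) (Real.exp_pos _).le
        _ = (1 / A) * Real.exp (-A^2 + -u_a / ε) := by
            rw [Real.exp_add]; ring
        _ = (1 / A) * Real.exp (c / ε) := by rw [hexp]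
        _ ≤ (1 / A) * 1 := by
            apply mul_le_mul_of_nonneg_left _ (by positivity)
            exact Real.exp_le_one_iff.2 (div_nonpos_of_nonpos_of_nonneg hc.le hε.le)
        _ = Real.sqrt (2 * t * ε) / (a - x) := by
            rw [hA_def, one_div_div, mul_one]
    · exact hg
  · -- case c > 0
    intro hxa
    have hsq : (a - x)^2 < -2 * u_a * t := by
      have h1 : a - x < Real.sqrt (-2 * u_a * t) := by linarith
      exact (Real.lt_sqrt hax.le).1 h1
    have hc : 0 < c := by
      rw [hc_def, sub_pos, div_lt_iff₀ (by positivity)]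
      nlinarith
    set L : ℝ := 2 * (a - x) / Real.sqrt (2 * t) with hL_def
    -- the auxiliary lower-bound function tends to atTop
    have hy : Tendsto (fun ε : ℝ => 1 / Real.sqrt ε) (nhdsWithin 0 (Set.Ioi 0)) atTop := by
      have hsqrt : Tendsto (fun ε : ℝ => Real.sqrt ε) (nhdsWithin 0 (Set.Ioi 0))
          (nhdsWithin 0 (Set.Ioi 0)) := by
        apply tendsto_nhdsWithin_of_tendsto_nhds_of_eventually_within
        · have := Real.continuous_sqrt.tendsto 0
          simpa using this.mono_left nhdsWithin_le_nhds
        · filter_upwards [self_mem_nhdsWithin] with ε (hε : 0 < ε)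
          exact Real.sqrt_pos.2 hε
      simpa [one_div, Function.comp_def] using tendsto_inv_nhdsGT_zero.comp hsqrt
    have hE : Tendsto (fun ε : ℝ => (1 / Real.sqrt ε) * (c * (1 / Real.sqrt ε) - L) - 1)
        (nhdsWithin 0 (Set.Ioi 0)) atTop := by
      apply tendsto_atTop_add_const_right
      apply Tendsto.atTop_mul_atTop₀ hy
      exact tendsto_atTop_add_const_right _ (-L) (hy.const_mul_atTop hc)
    have hexp : Tendsto
        (fun ε : ℝ => Real.exp ((1 / Real.sqrt ε) * (c * (1 / Real.sqrt ε) - L) - 1))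
        (nhdsWithin 0 (Set.Ioi 0)) atTop := Real.tendsto_exp_atTop.comp hE
    apply tendsto_atTop_mono' _ _ hexp
    filter_upwards [self_mem_nhdsWithin] with ε (hε : 0 < ε)
    obtain ⟨hs, hA2⟩ := key ε hε
    set A : ℝ := (a - x) / Real.sqrt (2 * t * ε) with hA_def
    have hA : 0 < A := div_pos hax hs
    have hsε : 0 < Real.sqrt ε := Real.sqrt_pos.2 hε
    have hs2t : 0 < Real.sqrt (2 * t) := Real.sqrt_pos.2 (by positivity)
    have hmul : Real.sqrt (2 * t * ε) = Real.sqrt (2 * t) * Real.sqrt ε :=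
      Real.sqrt_mul (by positivity) ε
    have hεsq : Real.sqrt ε * Real.sqrt ε = ε := Real.mul_self_sqrt hε.le
    have hrec : (1 / Real.sqrt ε) * (1 / Real.sqrt ε) = 1 / ε := by
      rw [div_mul_div_comm, one_mul, hεsq]
    have e2 : (1 / Real.sqrt ε) * L = 2 * A := by
      rw [hL_def, hA_def, hmul, div_mul_div_comm, one_mul, mul_comm (Real.sqrt ε), mul_div_assoc]
    have harg : (1 / Real.sqrt ε) * (c * (1 / Real.sqrt ε) - L) - 1 = -(A + 1)^2 + -u_a / ε := by
      have e1 : (1 / Real.sqrt ε) * (c * (1 / Real.sqrt ε) - L) - 1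
          = c * ((1 / Real.sqrt ε) * (1 / Real.sqrt ε)) - (1 / Real.sqrt ε) * L - 1 := by ring
      rw [e1, hrec, e2, hc_def,
        show -(A + 1)^2 + -u_a / ε = -A^2 - 2 * A - 1 + -u_a / ε by ring, hA2]
      field_simp
      ring
    calc Real.exp ((1 / Real.sqrt ε) * (c * (1 / Real.sqrt ε) - L) - 1)
        = Real.exp (-(A + 1)^2) * Real.exp (-u_a / ε) := by
          rw [harg, Real.exp_add]
      _ ≤ erfc A * Real.exp (-u_a / ε) :=
          mul_le_mul_of_nonneg_right (erfc_lower hA.le) (Real.exp_pos _).le
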